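/- For 0 < z < 1/4, Σ_{m≥1} C(2m,m)·(Σ_{k=1}^{m}(1/(k-1/2) - 1/k))·zᵐ = (1/√(1-4z))·log(4/(1+√(1-4z))²). -/

import Mathlib

open Real Set

noncomputable section LogSeriesAux

private def cb (n : ℕ) : ℝ := (Nat.centralBinom n : ℝ)
private def hm (n : ℕ) : ℝ := ∑ k ∈ Finset.Icc 1 n, (1 / ((k : ℝ) - 1 / 2) - 1 / k)

private lemma cb_pos (n : ℕ) : 0 < cb n := by
  unfold cb; exact_mod_cast Nat.centralBinom_pos n

private lemma cb_zero : cb 0 = 1 := by simp [cb, Nat.centralBinom]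

private lemma cb_one : cb 1 = 2 := by
  unfold cb; norm_num [Nat.centralBinom]

private lemma cb_le (n : ℕ) : cb n ≤ 4 ^ n := by
  have h1 : Nat.centralBinom n ≤ (2 * n + 1).choose n :=
    Nat.choose_le_choose n (by omega)
  have h2 := h1.trans (Nat.choose_middle_le_pow n)
  unfold cb
  exact_mod_cast h2

private lemma cb_succ (n : ℕ) : ((n : ℝ) + 1) * cb (n + 1) = (4 * n + 2) * cb n := by
  have h := Nat.succ_mul_centralBinom_succ n
  have h2 : ((n + 1) * Nat.centralBinom (n + 1) : ℝ)
      = ((2 * (2 * n + 1)) * Nat.centralBinom n : ℝ) := by exact_mod_cast congrArg (Nat.cast (R := ℝ)) h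
  push_cast at h2
  unfold cb
  linarith

private lemma hm_zero : hm 0 = 0 := by simp [hm]

private lemma hm_one : hm 1 = 1 := by norm_num [hm]

private lemma hm_succ (n : ℕ) :
    hm (n + 1) = hm n + (1 / ((n : ℝ) + 1 / 2) - 1 / ((n : ℝ) + 1)) := by
  unfold hm
  rw [Finset.sum_Icc_succ_top (by omega : 1 ≤ n + 1)]
  push_cast
  congr 2
  ring

private lemma hm_nonneg (n : ℕ) : 0 ≤ hm n := by
  apply Finset.sum_nonneg
  intro k hk
  have hk1 : 1 ≤ k := (Finset.mem_Icc.mp hk).1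
  have hk1' : (1 : ℝ) ≤ (k : ℝ) := by exact_mod_cast hk1
  have h0 : (0 : ℝ) < (k : ℝ) - 1 / 2 := by linarith
  have : 1 / (k : ℝ) ≤ 1 / ((k : ℝ) - 1 / 2) := by
    apply one_div_le_one_div_of_le h0
    linarith
  linarith

private lemma hm_le (n : ℕ) : hm n ≤ 2 := by
  have key : ∀ m : ℕ, hm m ≤ 2 - 1 / ((m : ℝ) + 1 / 2) := by
    intro m
    induction m with
    | zero => rw [hm_zero]; norm_num
    | succ k ih =>
      rw [hm_succ k]
      push_cast
      have h1 : (0:ℝ) < (k:ℝ) + 1 := by positivity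
      have h2 : (0:ℝ) < (k:ℝ) + 1 + 1/2 := by positivity
      have h3 : 1 / ((k:ℝ) + 1 + 1/2) ≤ 1 / ((k:ℝ) + 1) := by
        apply one_div_le_one_div_of_le h1; linarith
      linarith
  have h := key n
  have : (0:ℝ) < (n:ℝ) + 1/2 := by positivity
  have : 0 < 1 / ((n : ℝ) + 1/2) := by positivity
  linarith


private def Ff (x : ℝ) : ℝ := ∑' n : ℕ, cb n * x ^ n
private def Lf (x : ℝ) : ℝ := ∑' n : ℕ, cb (n + 1) * hm (n + 1) * x ^ (n + 1)
private def Tf (x : ℝ) : ℝ := ∑' n : ℕ, cb n / ((n : ℝ) + 1) * x ^ (n + 1)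
private def Bf (x : ℝ) : ℝ := ∑' n : ℕ, 2 * (cb n / ((n : ℝ) + 1)) * x ^ n
private def DFf (x : ℝ) : ℝ := ∑' n : ℕ, ((n : ℝ) + 1) * cb (n + 1) * x ^ n
private def DLf (x : ℝ) : ℝ := ∑' n : ℕ, ((n : ℝ) + 1) * (cb (n + 1) * hm (n + 1)) * x ^ n

/-- summability from a bound `C * (n+1) * q^n`. -/
private lemma sum_aux {q : ℝ} (h0 : 0 ≤ q) (h1 : q < 1) {f : ℕ → ℝ} (C : ℝ)
    (hf : ∀ n, |f n| ≤ C * (((n : ℝ) + 1) * q ^ n)) : Summable f := by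
  refine Summable.of_norm_bounded ?_ (by simpa [Real.norm_eq_abs] using hf)
  apply Summable.mul_left
  have h2 : Summable (fun n : ℕ => (n : ℝ) * q ^ n) := by
    simpa using summable_pow_mul_geometric_of_norm_lt_one 1
      (by rwa [Real.norm_eq_abs, abs_of_nonneg h0] : ‖q‖ < 1)
  have h3 := summable_geometric_of_lt_one h0 h1
  have := h2.add h3
  refine this.congr fun n => by ring

section Withr

variable {r : ℝ}

private lemma pow_bound {y : ℝ} (hy : |y| ≤ r) (n : ℕ) : |y| ^ n ≤ r ^ n :=
  pow_le_pow_left₀ (abs_nonneg y) hy n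

-- |cb n * y^n| ≤ (4r)^n
private lemma bF (hr0 : 0 < r) {y : ℝ} (hy : |y| ≤ r) (n : ℕ) :
    |cb n * y ^ n| ≤ (4 * r) ^ n := by
  rw [abs_mul, abs_pow, mul_pow]
  apply mul_le_mul (by rw [abs_of_nonneg (cb_pos n).le]; exact cb_le n)
    (pow_bound hy n) (by positivity) (by positivity)

private lemma sF (hr0 : 0 < r) (h4r : 4 * r < 1) {y : ℝ} (hy : |y| ≤ r) :
    Summable fun n : ℕ => cb n * y ^ n := by
  refine sum_aux (by linarith) h4r 1 fun n => (bF hr0 hy n).trans ?_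
  have h1 : (0:ℝ) ≤ (4*r)^n := by positivity
  nlinarith [Nat.cast_nonneg (α := ℝ) n]

private lemma sDF (hr0 : 0 < r) (h4r : 4 * r < 1) {y : ℝ} (hy : |y| ≤ r) :
    Summable fun n : ℕ => ((n : ℝ) + 1) * cb (n + 1) * y ^ n := by
  refine sum_aux (by linarith) h4r 4 fun n => ?_
  rw [abs_mul, abs_mul, abs_pow]
  have h1 : |((n:ℝ)+1)| = (n:ℝ)+1 := abs_of_nonneg (by positivity)
  have h2 : |cb (n+1)| ≤ 4 ^ (n+1) := by
    rw [abs_of_nonneg (cb_pos _).le]; exact cb_le (n+1)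
  have h3 : |y| ^ n ≤ r ^ n := pow_bound hy n
  have h4 : (0:ℝ) ≤ (n:ℝ)+1 := by positivity
  calc |((n:ℝ)+1)| * |cb (n+1)| * |y|^n ≤ ((n:ℝ)+1) * 4^(n+1) * r^n := by
        rw [h1]
        apply mul_le_mul (mul_le_mul le_rfl h2 (abs_nonneg _) h4) h3 (by positivity) (by positivity)
    _ = 4 * (((n:ℝ)+1) * (4*r)^n) := by rw [mul_pow]; ring

private lemma mem_abs {y : ℝ} (hy : y ∈ Ioo (-r) r) : |y| ≤ r :=
  (abs_lt.2 ⟨hy.1, hy.2⟩).le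

private lemma sL (hr0 : 0 < r) (h4r : 4 * r < 1) {y : ℝ} (hy : |y| ≤ r) :
    Summable fun n : ℕ => cb (n + 1) * hm (n + 1) * y ^ (n + 1) := by
  refine sum_aux (by linarith) h4r 2 fun n => ?_
  have h2 : |cb (n+1) * y^(n+1)| ≤ (4*r)^(n+1) := bF hr0 hy (n+1)
  have h3 : (0 ≤ hm (n+1)) ∧ hm (n+1) ≤ 2 := ⟨hm_nonneg _, hm_le _⟩
  have h4 : (4*r)^(n+1) ≤ (4*r)^n :=
    pow_le_pow_of_le_one (by linarith) (by linarith) (by omega)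
  have h5 : |cb (n+1) * hm (n+1) * y^(n+1)| = hm (n+1) * |cb (n+1) * y^(n+1)| := by
    rw [abs_mul, abs_mul, abs_of_nonneg h3.1, abs_mul]; ring
  rw [h5]
  have h6 : (0:ℝ) ≤ (4*r)^n := by positivity
  have h7 : |cb (n+1) * y ^ (n+1)| ≤ (4*r)^n := h2.trans h4
  nlinarith [abs_nonneg (cb (n+1) * y^(n+1)), Nat.cast_nonneg (α := ℝ) n]

private lemma sDL (hr0 : 0 < r) (h4r : 4 * r < 1) {y : ℝ} (hy : |y| ≤ r) :
    Summable fun n : ℕ => ((n : ℝ) + 1) * (cb (n + 1) * hm (n + 1)) * y ^ n := by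
  refine sum_aux (by linarith) h4r 8 fun n => ?_
  have h2 : |cb (n+1)| ≤ 4 ^ (n+1) := by
    rw [abs_of_nonneg (cb_pos _).le]; exact cb_le (n+1)
  have h3 : |y| ^ n ≤ r ^ n := pow_bound hy n
  have h4 : (0:ℝ) ≤ (n:ℝ)+1 := by positivity
  have h5 : |((n:ℝ)+1) * (cb (n+1) * hm (n+1)) * y ^ n|
      = ((n:ℝ)+1) * (|cb (n+1)| * hm (n+1)) * |y|^n := by
    rw [abs_mul, abs_mul, abs_mul, abs_of_nonneg h4, abs_of_nonneg (hm_nonneg _), abs_pow]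
  rw [h5]
  have h6 := hm_le (n+1)
  have h7 := hm_nonneg (n+1)
  have h8 : (0:ℝ) ≤ 4^(n+1) := by positivity
  have h9 : |cb (n+1)| * hm (n+1) ≤ 4^(n+1) * 2 := by nlinarith [abs_nonneg (cb (n+1))]
  calc ((n:ℝ)+1) * (|cb (n+1)| * hm (n+1)) * |y|^n ≤ ((n:ℝ)+1) * (4^(n+1) * 2) * r^n := by
        apply mul_le_mul (mul_le_mul le_rfl h9 (by positivity) h4) h3 (by positivity) (by positivity)
    _ = 8 * (((n:ℝ)+1) * (4*r)^n) := by rw [mul_pow]; ring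

private lemma sT (hr0 : 0 < r) (h4r : 4 * r < 1) {y : ℝ} (hy : |y| ≤ r) :
    Summable fun n : ℕ => cb n / ((n : ℝ) + 1) * y ^ (n + 1) := by
  refine sum_aux (by linarith) h4r 1 fun n => ?_
  have h4 : (0:ℝ) < (n:ℝ)+1 := by positivity
  have h2 : |cb n / ((n:ℝ)+1)| ≤ 4 ^ n := by
    rw [abs_div, abs_of_nonneg (cb_pos _).le, abs_of_nonneg h4.le]
    calc cb n / ((n:ℝ)+1) ≤ cb n / 1 := by
          apply div_le_div_of_nonneg_left (cb_pos n).le one_pos (by linarith) |>.trans le_rfl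
      _ = cb n := by ring
      _ ≤ 4^n := cb_le n
  have h3 : |y| ^ (n+1) ≤ r ^ (n+1) := pow_bound hy (n+1)
  have h5 : r^(n+1) ≤ r^n := pow_le_pow_of_le_one hr0.le (by linarith) (by omega)
  rw [abs_mul, abs_pow]
  have h6 : (0:ℝ) ≤ r^n := by positivity
  calc |cb n / ((n:ℝ)+1)| * |y|^(n+1) ≤ 4^n * r^n := by
        apply mul_le_mul h2 (h3.trans h5) (by positivity) (by positivity)
    _ = (4*r)^n := (mul_pow _ _ _).symm
    _ ≤ 1 * (((n:ℝ)+1) * (4*r)^n) := by nlinarith [Nat.cast_nonneg (α := ℝ) n, pow_nonneg (by linarith : (0:ℝ) ≤ 4*r) n]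

private lemma sB (hr0 : 0 < r) (h4r : 4 * r < 1) {y : ℝ} (hy : |y| ≤ r) :
    Summable fun n : ℕ => 2 * (cb n / ((n : ℝ) + 1)) * y ^ n := by
  refine sum_aux (by linarith) h4r 2 fun n => ?_
  have h4 : (0:ℝ) < (n:ℝ)+1 := by positivity
  have h2 : |cb n / ((n:ℝ)+1)| ≤ 4 ^ n := by
    rw [abs_div, abs_of_nonneg (cb_pos _).le, abs_of_nonneg h4.le]
    calc cb n / ((n:ℝ)+1) ≤ cb n / 1 := by
          apply div_le_div_of_nonneg_left (cb_pos n).le one_pos (by linarith) |>.trans le_rfl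
      _ = cb n := by ring
      _ ≤ 4^n := cb_le n
  have h3 : |y| ^ n ≤ r ^ n := pow_bound hy n
  rw [abs_mul, abs_mul, abs_pow]
  have : |(2:ℝ)| = 2 := by norm_num
  rw [this]
  calc 2 * |cb n / ((n:ℝ)+1)| * |y|^n ≤ 2 * 4^n * r^n := by
        apply mul_le_mul (mul_le_mul le_rfl h2 (abs_nonneg _) (by norm_num)) h3 (by positivity) (by positivity)
    _ = 2 * (4*r)^n := by rw [mul_pow]; ring
    _ ≤ 2 * (((n:ℝ)+1) * (4*r)^n) := by nlinarith [Nat.cast_nonneg (α := ℝ) n, pow_nonneg (by linarith : (0:ℝ) ≤ 4*r) n]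

private lemma su (hr0 : 0 < r) (h4r : 4 * r < 1) :
    Summable fun n : ℕ => ((n : ℝ) * (4 * r) ^ n) / r := by
  apply Summable.div_const
  simpa using summable_pow_mul_geometric_of_norm_lt_one 1
    (by rw [Real.norm_eq_abs, abs_of_nonneg (by linarith : (0:ℝ) ≤ 4*r)]; linarith : ‖4*r‖ < 1)

private lemma bFd (hr0 : 0 < r) (h4r : 4 * r < 1) {y : ℝ} (hy : |y| ≤ r) (n : ℕ) :
    |cb n * ((n : ℝ) * y ^ (n - 1))| ≤ ((n : ℝ) * (4 * r) ^ n) / r := by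
  cases n with
  | zero => simp
  | succ m =>
    have h1 : (m + 1) - 1 = m := rfl
    rw [h1, abs_mul, abs_mul, abs_pow]
    have h2 : |cb (m+1)| ≤ 4 ^ (m+1) := by
      rw [abs_of_nonneg (cb_pos _).le]; exact cb_le (m+1)
    have h3 : |y| ^ m ≤ r ^ m := pow_bound hy m
    have h4 : |((m + 1 : ℕ) : ℝ)| = (m:ℝ)+1 := by
      rw [abs_of_nonneg (by positivity)]; push_cast; ring
    rw [h4]
    have key : |cb (m+1)| * (((m:ℝ)+1) * |y|^m) ≤ 4^(m+1) * (((m:ℝ)+1) * r^m) := by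
      apply mul_le_mul h2 (by nlinarith [abs_nonneg y, pow_nonneg (abs_nonneg y) m])
        (by positivity) (by positivity)
    have heq : ((((m+1:ℕ)) : ℝ) * (4*r)^(m+1)) / r = 4^(m+1) * (((m:ℝ)+1) * r^m) := by
      rw [mul_pow]
      field_simp
      push_cast
      ring
    rw [heq]
    exact key

private lemma hFd (hr0 : 0 < r) (h4r : 4 * r < 1) {y : ℝ} (hy : y ∈ Ioo (-r) r) :
    HasDerivAt Ff (DFf y) y := by
  have h0 : (0:ℝ) ∈ Ioo (-r) r := ⟨by linarith, hr0⟩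
  have habs0 : |(0:ℝ)| ≤ r := by simp [hr0.le]
  have key := hasDerivAt_tsum_of_isPreconnected (su hr0 h4r) isOpen_Ioo isPreconnected_Ioo
    (g := fun n y => cb n * y ^ n) (g' := fun n y => cb n * ((n:ℝ) * y ^ (n-1)))
    (fun n x _ => (hasDerivAt_pow n x).const_mul (cb n))
    (fun n x hx => by rw [Real.norm_eq_abs]; exact bFd hr0 h4r (mem_abs hx) n)
    h0 (sF hr0 h4r habs0) hy
  have hsum : Summable fun n : ℕ => cb n * ((n:ℝ) * y ^ (n-1)) := by
    apply Summable.of_norm_bounded (su hr0 h4r)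
    intro n
    rw [Real.norm_eq_abs]
    exact bFd hr0 h4r (mem_abs hy) n
  have heq : (∑' n : ℕ, cb n * ((n:ℝ) * y ^ (n-1))) = DFf y := by
    rw [Summable.tsum_eq_zero_add hsum]
    simp only [Nat.cast_zero, zero_mul, mul_zero, zero_add]
    unfold DFf
    apply tsum_congr
    intro n
    have : (n + 1) - 1 = n := rfl
    rw [this]
    push_cast
    ring
  rw [heq] at key
  exact key

private lemma hLd (hr0 : 0 < r) (h4r : 4 * r < 1) {y : ℝ} (hy : y ∈ Ioo (-r) r) :
    HasDerivAt Lf (DLf y) y := by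
  have h0 : (0:ℝ) ∈ Ioo (-r) r := ⟨by linarith, hr0⟩
  have habs0 : |(0:ℝ)| ≤ r := by simp [hr0.le]
  have key := hasDerivAt_tsum_of_isPreconnected
    (u := fun n : ℕ => 8 * (((n:ℝ)+1) * (4*r)^n))
    ?_ isOpen_Ioo isPreconnected_Ioo
    (g := fun n y => cb (n+1) * hm (n+1) * y ^ (n+1))
    (g' := fun n y => cb (n+1) * hm (n+1) * (((n:ℝ)+1) * y ^ n))
    (fun n x _ => by
      have h := (hasDerivAt_pow (n+1) x).const_mul (cb (n+1) * hm (n+1))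
      have h2 : (n + 1) - 1 = n := rfl
      rw [h2] at h
      refine h.congr_deriv ?_
      push_cast
      ring)
    (fun n x hx => ?_) h0 (sL hr0 h4r habs0) hy
  · have heq : (∑' n : ℕ, cb (n+1) * hm (n+1) * (((n:ℝ)+1) * y ^ n)) = DLf y := by
      unfold DLf
      exact tsum_congr fun n => by ring
    rw [heq] at key
    exact key
  · -- summability of the bound
    apply Summable.mul_left
    have h2 : Summable (fun n : ℕ => (n : ℝ) * (4*r) ^ n) := by
      simpa using summable_pow_mul_geometric_of_norm_lt_one 1
        (by rw [Real.norm_eq_abs, abs_of_nonneg (by linarith : (0:ℝ) ≤ 4*r)]; linarith : ‖4*r‖ < 1)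
    have h3 := summable_geometric_of_lt_one (by linarith : (0:ℝ) ≤ 4*r) h4r
    exact (h2.add h3).congr fun n => by ring
  · -- bound
    have hxa := mem_abs hx
    rw [Real.norm_eq_abs]
    have h5 : |cb (n+1) * hm (n+1) * (((n:ℝ)+1) * x ^ n)|
        = ((n:ℝ)+1) * (|cb (n+1)| * hm (n+1)) * |x|^n := by
      rw [abs_mul, abs_mul, abs_mul, abs_of_nonneg (hm_nonneg _), abs_pow,
        abs_of_nonneg (by positivity : (0:ℝ) ≤ (n:ℝ)+1)]
      ring
    rw [h5]
    have h2 : |cb (n+1)| ≤ 4 ^ (n+1) := by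
      rw [abs_of_nonneg (cb_pos _).le]; exact cb_le (n+1)
    have h3 : |x| ^ n ≤ r ^ n := pow_bound hxa n
    have h6 := hm_le (n+1)
    have h7 := hm_nonneg (n+1)
    have h9 : |cb (n+1)| * hm (n+1) ≤ 4^(n+1) * 2 := by
      nlinarith [abs_nonneg (cb (n+1)), (by positivity : (0:ℝ) ≤ 4^(n+1))]
    calc ((n:ℝ)+1) * (|cb (n+1)| * hm (n+1)) * |x|^n ≤ ((n:ℝ)+1) * (4^(n+1) * 2) * r^n := by
          apply mul_le_mul (mul_le_mul le_rfl h9 (by positivity) (by positivity)) h3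
            (by positivity) (by positivity)
      _ = 8 * (((n:ℝ)+1) * (4*r)^n) := by rw [mul_pow]; ring

private lemma hTd (hr0 : 0 < r) (h4r : 4 * r < 1) {y : ℝ} (hy : y ∈ Ioo (-r) r) :
    HasDerivAt Tf (Ff y) y := by
  have h0 : (0:ℝ) ∈ Ioo (-r) r := ⟨by linarith, hr0⟩
  have habs0 : |(0:ℝ)| ≤ r := by simp [hr0.le]
  have key := hasDerivAt_tsum_of_isPreconnected
    (u := fun n : ℕ => (4*r)^n)
    (summable_geometric_of_lt_one (by linarith) h4r) isOpen_Ioo isPreconnected_Ioo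
    (g := fun n y => cb n / ((n:ℝ)+1) * y ^ (n+1))
    (g' := fun n y => cb n * y ^ n)
    (fun n x _ => by
      have h := (hasDerivAt_pow (n+1) x).const_mul (cb n / ((n:ℝ)+1))
      have h2 : (n + 1) - 1 = n := rfl
      rw [h2] at h
      refine h.congr_deriv ?_
      have hne : ((n:ℝ)+1) ≠ 0 := by positivity
      field_simp
      push_cast
      ring)
    (fun n x hx => by rw [Real.norm_eq_abs]; exact bF hr0 (mem_abs hx) n)
    h0 (sT hr0 h4r habs0) hy
  exact key

private lemma hFode (hr0 : 0 < r) (h4r : 4 * r < 1) {y : ℝ} (hy : |y| ≤ r) :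
    (1 - 4 * y) * DFf y = 2 * Ff y := by
  have hsF := sF hr0 h4r hy
  have hsDF := sDF hr0 h4r hy
  have hs2F : Summable fun n : ℕ => 2 * (cb n * y ^ n) := hsF.mul_left 2
  have hE : Summable fun n : ℕ => (((n:ℝ)+1) * cb (n+1) - 2 * cb n) * y ^ n :=
    (hsDF.sub hs2F).congr fun n => by ring
  have e1 : (∑' n : ℕ, (((n:ℝ)+1) * cb (n+1) - 2 * cb n) * y ^ n) = DFf y - 2 * Ff y := by
    unfold DFf Ff
    rw [← tsum_mul_left, ← Summable.tsum_sub hsDF hs2F]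
    exact tsum_congr fun n => by ring
  have e3 : (∑' n : ℕ, (4*y) * (((n:ℝ)+1) * cb (n+1) * y ^ n)) = 4 * y * DFf y := by
    unfold DFf; rw [tsum_mul_left]
  have e2 : (∑' n : ℕ, (((n:ℝ)+1) * cb (n+1) - 2 * cb n) * y ^ n)
      = ∑' n : ℕ, (4*y) * (((n:ℝ)+1) * cb (n+1) * y ^ n) := by
    rw [Summable.tsum_eq_zero_add hE]
    have h0 : ((((0:ℕ):ℝ)+1) * cb (0+1) - 2 * cb 0) * y ^ 0 = 0 := by
      rw [cb_one, cb_zero]; norm_num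
    rw [h0, zero_add]
    apply tsum_congr
    intro n
    have h := cb_succ (n+1)
    push_cast at h ⊢
    linear_combination y ^ (n+1) * h
  have key : DFf y - 2 * Ff y = 4 * y * DFf y := by rw [← e1, e2, e3]
  linear_combination key

private lemma coeff_id (n : ℕ) :
    (((n:ℝ)+1)+1) * (cb (n+2) * hm (n+2)) - 2 * (cb (n+1) / (((n:ℝ)+1)+1))
      = (4*(n:ℝ)+6) * (cb (n+1) * hm (n+1)) := by
  have hcb := cb_succ (n+1)
  push_cast at hcb
  have hhm := hm_succ (n+1)
  push_cast at hhm
  have hne2 : ((n:ℝ)+2) ≠ 0 := by positivity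
  have hcb' : cb (n+2) = (4*(n:ℝ)+6) * cb (n+1) / ((n:ℝ)+2) := by
    field_simp
    linarith [hcb]
  rw [show n + 2 = n + 1 + 1 from rfl] at hcb' ⊢
  rw [hcb', hhm]
  have hne3 : ((n:ℝ)+1+1/2) ≠ 0 := by positivity
  have hne4 : ((n:ℝ)+1+1) ≠ 0 := by positivity
  field_simp
  ring

private lemma hLode (hr0 : 0 < r) (h4r : 4 * r < 1) {y : ℝ} (hy : |y| ≤ r) :
    (1 - 4 * y) * DLf y - 2 * Lf y = Bf y := by
  have hsL := sL hr0 h4r hy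
  have hsDL := sDL hr0 h4r hy
  have hsB := sB hr0 h4r hy
  have hE : Summable fun n : ℕ =>
      (((n:ℝ)+1) * (cb (n+1) * hm (n+1)) - 2 * (cb n / ((n:ℝ)+1))) * y ^ n :=
    (hsDL.sub hsB).congr fun n => by ring
  have e1 : (∑' n : ℕ, (((n:ℝ)+1) * (cb (n+1) * hm (n+1)) - 2 * (cb n / ((n:ℝ)+1))) * y ^ n)
      = DLf y - Bf y := by
    unfold DLf Bf
    rw [← Summable.tsum_sub hsDL hsB]
    exact tsum_congr fun n => by ring
  have e3 : (∑' n : ℕ, ((4*y) * (((n:ℝ)+1) * (cb (n+1) * hm (n+1)) * y ^ n)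
        + 2 * (cb (n+1) * hm (n+1) * y ^ (n+1))))
      = 4 * y * DLf y + 2 * Lf y := by
    unfold DLf Lf
    rw [Summable.tsum_add ((sDL hr0 h4r hy).mul_left (4*y)) (hsL.mul_left 2), tsum_mul_left, tsum_mul_left]
  have e2 : (∑' n : ℕ, (((n:ℝ)+1) * (cb (n+1) * hm (n+1)) - 2 * (cb n / ((n:ℝ)+1))) * y ^ n)
      = ∑' n : ℕ, ((4*y) * (((n:ℝ)+1) * (cb (n+1) * hm (n+1)) * y ^ n)
        + 2 * (cb (n+1) * hm (n+1) * y ^ (n+1))) := by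
    rw [Summable.tsum_eq_zero_add hE]
    have h0 : ((((0:ℕ):ℝ)+1) * (cb (0+1) * hm (0+1)) - 2 * (cb 0 / (((0:ℕ):ℝ)+1))) * y ^ 0 = 0 := by
      rw [cb_one, cb_zero, hm_one]; norm_num
    rw [h0, zero_add]
    apply tsum_congr
    intro n
    have h := coeff_id n
    push_cast
    linear_combination y ^ (n+1) * h
  have key : DLf y - Bf y = 4 * y * DLf y + 2 * Lf y := by rw [← e1, e2, e3]
  linear_combination key

end Withr

private lemma Ff_zero : Ff 0 = 1 := by
  unfold Ff
  rw [tsum_eq_single 0 (fun n hn => by simp [zero_pow hn])]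
  simp [cb_zero]

private lemma Lf_zero : Lf 0 = 0 := by
  unfold Lf
  simp

private lemma Tf_zero : Tf 0 = 0 := by
  unfold Tf
  simp

private lemma Bf_zero : Bf 0 = 2 := by
  unfold Bf
  rw [tsum_eq_single 0 (fun n hn => by simp [zero_pow hn])]
  simp [cb_zero]

private lemma hsqd {x : ℝ} (hx : 0 < 1 - 4*x) :
    HasDerivAt (fun t : ℝ => Real.sqrt (1 - 4*t)) (-2 / Real.sqrt (1 - 4*x)) x := by
  have hne : (1 - 4*x) ≠ 0 := ne_of_gt hx
  have h1 : HasDerivAt (fun t : ℝ => 1 - 4*t) (-4) x := by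
    simpa using ((hasDerivAt_id x).const_mul (4:ℝ)).const_sub 1
  have h2 := (Real.hasDerivAt_sqrt hne).comp x h1
  refine h2.congr_deriv ?_
  have hs : 0 < Real.sqrt (1 - 4*x) := Real.sqrt_pos.2 hx
  field_simp
  ring

end LogSeriesAux

theorem log_series_identity (z : ℝ) (hz0 : 0 < z) (hz : z < 1 / 4) :
    ∑' m : ℕ, (Nat.centralBinom (m + 1) : ℝ) *
        (∑ k ∈ Finset.Icc 1 (m + 1), (1 / ((k : ℝ) - 1 / 2) - 1 / k)) * z ^ (m + 1)
      = (1 / Real.sqrt (1 - 4 * z)) *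
        Real.log (4 / (1 + Real.sqrt (1 - 4 * z)) ^ 2) := by
  set r : ℝ := 1/8 + z/2 with hr_def
  have hr0 : 0 < r := by positivity
  have h4r : 4 * r < 1 := by rw [hr_def]; linarith
  have hzr : z < r := by rw [hr_def]; linarith
  have hsub : Set.Icc 0 z ⊆ Set.Ioo (-r) r := fun x hx =>
    ⟨by linarith [hx.1], by linarith [hx.2]⟩
  have h4x : ∀ x ∈ Set.Icc (0:ℝ) z, 0 < 1 - 4*x := fun x hx => by
    have := hx.2; linarith
  have hupos : ∀ x ∈ Set.Icc (0:ℝ) z, 0 < Real.sqrt (1 - 4*x) := fun x hx =>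
    Real.sqrt_pos.2 (h4x x hx)
  have hu2 : ∀ x ∈ Set.Icc (0:ℝ) z, (Real.sqrt (1 - 4*x))^2 = 1 - 4*x := fun x hx =>
    Real.sq_sqrt (h4x x hx).le
  -- Step A : Ff x * sqrt(1-4x) = 1 on Icc 0 z
  have stepA : ∀ x ∈ Set.Icc (0:ℝ) z, Ff x * Real.sqrt (1 - 4*x) = 1 := by
    have := eq_of_has_deriv_right_eq (a := 0) (b := z)
      (f := fun x => Ff x * Real.sqrt (1 - 4*x)) (g := fun _ => (1:ℝ))
      (f' := fun _ => (0:ℝ))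
      (fun x hx => by
        have hx' : x ∈ Set.Icc (0:ℝ) z := ⟨hx.1, hx.2.le⟩
        have hmem := hsub hx'
        have hd := (hFd hr0 h4r hmem).mul (hsqd (h4x x hx'))
        have hode := hFode hr0 h4r (mem_abs hmem)
        have hu := hupos x hx'
        have hu2' := hu2 x hx'
        have hval : DFf x * Real.sqrt (1 - 4*x) + Ff x * (-2 / Real.sqrt (1 - 4*x)) = 0 := by
          field_simp
          linear_combination hode + DFf x * hu2'
        rw [hval] at hd
        exact hd.hasDerivWithinAt)
      (fun x hx => (hasDerivAt_const x (1:ℝ)).hasDerivWithinAt)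
      (fun x hx => ((hFd hr0 h4r (hsub hx)).mul (hsqd (h4x x hx))).continuousAt.continuousWithinAt)
      continuousOn_const
      (by simp [Ff_zero])
    exact this
  -- Step B : Tf x = (1 - sqrt(1-4x))/2 on Icc 0 z
  have stepB : ∀ x ∈ Set.Icc (0:ℝ) z, Tf x = (1 - Real.sqrt (1 - 4*x)) / 2 := by
    have := eq_of_has_deriv_right_eq (a := 0) (b := z)
      (f := Tf) (g := fun x => (1 - Real.sqrt (1 - 4*x)) / 2)
      (f' := fun x => Ff x)
      (fun x hx => by
        have hx' : x ∈ Set.Icc (0:ℝ) z := ⟨hx.1, hx.2.le⟩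
        exact (hTd hr0 h4r (hsub hx')).hasDerivWithinAt)
      (fun x hx => by
        have hx' : x ∈ Set.Icc (0:ℝ) z := ⟨hx.1, hx.2.le⟩
        have hd := ((hsqd (h4x x hx')).const_sub 1).div_const 2
        have hu := hupos x hx'
        have hA := stepA x hx'
        have hFx : Ff x = 1 / Real.sqrt (1 - 4*x) := by
          rw [eq_div_iff hu.ne']; exact hA
        have hval : -(-2 / Real.sqrt (1 - 4*x)) / 2 = Ff x := by
          rw [hFx]; ring
        rw [hval] at hd
        exact hd.hasDerivWithinAt)
      (fun x hx => (hTd hr0 h4r (hsub hx)).continuousAt.continuousWithinAt)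
      (fun x hx => (((hsqd (h4x x hx)).const_sub 1).div_const 2).continuousAt.continuousWithinAt)
      (by simp [Tf_zero])
    exact this
  -- Step C : Bf x = 4 / (1 + sqrt (1-4x)) on Icc 0 z
  have stepC : ∀ x ∈ Set.Icc (0:ℝ) z, Bf x = 4 / (1 + Real.sqrt (1 - 4*x)) := by
    intro x hx
    have hu := hupos x hx
    have h1u : (0:ℝ) < 1 + Real.sqrt (1 - 4*x) := by linarith
    rcases hx.1.eq_or_lt with h | h
    · rw [← h]
      norm_num [Bf_zero]
    · have hxB : x * Bf x = 2 * Tf x := by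
        unfold Bf Tf
        rw [← tsum_mul_left, ← tsum_mul_left]
        exact tsum_congr fun n => by ring
      rw [stepB x hx] at hxB
      have hu2' := hu2 x hx
      rw [eq_div_iff h1u.ne']
      nlinarith [hxB, hu2', h]
  -- Step D : Lf x * sqrt(1-4x) = log 4 - 2 log (1 + sqrt(1-4x)) on Icc 0 z
  have stepD : ∀ x ∈ Set.Icc (0:ℝ) z,
      Lf x * Real.sqrt (1 - 4*x) = Real.log 4 - 2 * Real.log (1 + Real.sqrt (1 - 4*x)) := by
    have := eq_of_has_deriv_right_eq (a := 0) (b := z)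
      (f := fun x => Lf x * Real.sqrt (1 - 4*x))
      (g := fun x => Real.log 4 - 2 * Real.log (1 + Real.sqrt (1 - 4*x)))
      (f' := fun x => DLf x * Real.sqrt (1 - 4*x) + Lf x * (-2 / Real.sqrt (1 - 4*x)))
      (fun x hx => by
        have hx' : x ∈ Set.Icc (0:ℝ) z := ⟨hx.1, hx.2.le⟩
        exact ((hLd hr0 h4r (hsub hx')).mul (hsqd (h4x x hx'))).hasDerivWithinAt)
      (fun x hx => by
        have hx' : x ∈ Set.Icc (0:ℝ) z := ⟨hx.1, hx.2.le⟩
        have hu := hupos x hx'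
        have h1u : (0:ℝ) < 1 + Real.sqrt (1 - 4*x) := by linarith
        have hlog := (Real.hasDerivAt_log h1u.ne').comp x ((hsqd (h4x x hx')).const_add 1)
        have hd := (hasDerivAt_const x (Real.log 4)).sub (hlog.const_mul 2)
        have hode := hLode hr0 h4r (mem_abs (hsub hx'))
        have hB := stepC x hx'
        have hu2' := hu2 x hx'
        have hval : 0 - 2 * ((1 + Real.sqrt (1 - 4*x))⁻¹ * (-2 / Real.sqrt (1 - 4*x)))
            = DLf x * Real.sqrt (1 - 4*x) + Lf x * (-2 / Real.sqrt (1 - 4*x)) := by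
          have hode2 : ((1 - 4*x) * DLf x - 2 * Lf x) * (1 + Real.sqrt (1 - 4*x)) = 4 := by
            rw [hB] at hode
            field_simp at hode
            linarith [hode]
          field_simp
          linear_combination (-1) * hode2
            - ((1 + Real.sqrt (1-4*x)) * DLf x) * hu2'
        rw [hval] at hd
        exact hd.hasDerivWithinAt)
      (fun x hx => ((hLd hr0 h4r (hsub hx)).mul (hsqd (h4x x hx))).continuousAt.continuousWithinAt)
      (fun x hx => by
        have hu := hupos x hx
        have h1u : (0:ℝ) < 1 + Real.sqrt (1 - 4*x) := by linarith
        have hlog := (Real.hasDerivAt_log h1u.ne').comp x ((hsqd (h4x x hx)).const_add 1)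
        exact ((hasDerivAt_const x (Real.log 4)).sub (hlog.const_mul 2)).continuousAt.continuousWithinAt)
      (by
        simp only [Lf_zero]
        norm_num
        rw [show (4:ℝ) = 2^2 by norm_num, Real.log_pow]
        push_cast
        ring)
    exact this
  -- Conclusion
  have hzmem : z ∈ Set.Icc (0:ℝ) z := ⟨hz0.le, le_rfl⟩
  have hD := stepD z hzmem
  have hu := hupos z hzmem
  have h1u : (0:ℝ) < 1 + Real.sqrt (1 - 4*z) := by linarith
  have hgoal_l : (∑' m : ℕ, (Nat.centralBinom (m + 1) : ℝ) *
        (∑ k ∈ Finset.Icc 1 (m + 1), (1 / ((k : ℝ) - 1 / 2) - 1 / k)) * z ^ (m + 1)) = Lf z := rfl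
  rw [hgoal_l]
  have hlogeq : Real.log (4 / (1 + Real.sqrt (1 - 4*z)) ^ 2)
      = Real.log 4 - 2 * Real.log (1 + Real.sqrt (1 - 4*z)) := by
    rw [Real.log_div (by norm_num) (by positivity), Real.log_pow]
    push_cast
    ring
  rw [hlogeq, ← hD]
  field_simp
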